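/- Let G be an undirected graph and let G' be the undirected graph with vertex set {u₁, u₂ : u ∈ V(G)} and edge set {(u₁,v₁) : (u,v) ∈ E(G)} ∪ {(u₁,u₂) : u ∈ V(G)} (each vertex gets one fresh pendant neighbour). Then for every vertex v of G, the normal-play outcome of Edge Geography on (G,v) equals the misère-play outcome of Edge Geography on (G',v₁). -/

import Mathlib

universe u
mutual
  inductive GNormalWin {α : Type u} (moves : α → α → Prop) : α → Prop
    | step {p q : α} : moves p q → GNormalLose moves q → GNormalWin moves p
  inductive GNormalLose {α : Type u} (moves : α → α → Prop) : α → Prop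
    | intro {p : α} : (∀ q, moves p q → GNormalWin moves q) → GNormalLose moves p
end

mutual
  inductive GMisereWin {α : Type u} (moves : α → α → Prop) : α → Prop
    | terminal {p : α} : (∀ q, ¬ moves p q) → GMisereWin moves p
    | step {p q : α} : moves p q → GMisereLose moves q → GMisereWin moves p
  inductive GMisereLose {α : Type u} (moves : α → α → Prop) : α → Prop
    | intro {p q₀ : α} : moves p q₀ → (∀ q, moves p q → GMisereWin moves q) → GMisereLose moves p
end

def nimMove {V : Type u} (adj : V → V → Prop) (p q : V × (V → ℕ)) : Prop :=
  adj p.1 q.1 ∧ q.2 p.1 < p.2 p.1 ∧ ∀ v, v ≠ p.1 → q.2 v = p.2 v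

mutual
  inductive NimRMWin {V : Type u} (adj : V → V → Prop) : V × (V → ℕ) → Prop
    | zero {p} : p.2 p.1 = 0 → NimRMWin adj p
    | step {p q} : nimMove adj p q → NimRMLose adj q → NimRMWin adj p
  inductive NimRMLose {V : Type u} (adj : V → V → Prop) : V × (V → ℕ) → Prop
    | intro {p} : p.2 p.1 ≠ 0 → (∀ q, nimMove adj p q → NimRMWin adj q) → NimRMLose adj p
end

def vgMove {V : Type u} (A : V → V → Prop) (p q : Set V × V) : Prop :=
  A p.2 q.2 ∧ q.2 ∈ p.1 ∧ q.2 ≠ p.2 ∧ q.1 = p.1 \ {p.2}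

def addOut {V : Type u} (A : V → V → Prop) : V ⊕ V → V ⊕ V → Prop
  | .inl a, .inl b => A a b
  | .inl a, .inr b => a = b
  | _, _ => False

def MaxMatching {V : Type u} (G : SimpleGraph V) (M : G.Subgraph) : Prop :=
  M.IsMatching ∧ ∀ N : G.Subgraph, N.IsMatching → N.edgeSet.ncard ≤ M.edgeSet.ncard

def egMoveU {V : Type u} (p q : Set (Sym2 V) × V) : Prop :=
  s(p.2, q.2) ∈ p.1 ∧ q.1 = p.1 \ {s(p.2, q.2)}

def egMoveD {V : Type u} (p q : Set (V × V) × V) : Prop :=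
  (p.2, q.2) ∈ p.1 ∧ q.1 = p.1 \ {(p.2, q.2)}

/-- `G` with a fresh pendant neighbour attached to every vertex. -/
def pendant {V : Type u} (G : SimpleGraph V) : SimpleGraph (V ⊕ V) :=
  SimpleGraph.fromRel (fun x y => match x, y with
    | .inl a, .inl b => G.Adj a b
    | .inl a, .inr b => a = b
    | _, _ => False)

section Aux

variable {V : Type} [Fintype V]

/-- Lift a set of edges on `V` to edges on `V ⊕ V` via `Sum.inl`. -/
def liftE (E : Set (Sym2 V)) : Set (Sym2 (V ⊕ V)) := (Sym2.map Sum.inl) '' E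

/-- The pendant edge at `u`. -/
def pendE (u : V) : Sym2 (V ⊕ V) := s(Sum.inl u, Sum.inr u)

/-- The set of all pendant edges. -/
def Pset (V : Type) : Set (Sym2 (V ⊕ V)) := Set.range pendE

lemma inl_inj2 : Function.Injective (Sym2.map (Sum.inl : V → V ⊕ V)) :=
  Sym2.map.injective Sum.inl_injective

lemma mem_liftE {E : Set (Sym2 V)} {a b : V} :
    s(Sum.inl a, Sum.inl b) ∈ liftE E ↔ s(a, b) ∈ E := by
  have h : s((Sum.inl a : V ⊕ V), Sum.inl b) = Sym2.map (Sum.inl : V → V ⊕ V) s(a, b) := rfl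
  rw [h]; exact inl_inj2.mem_set_image

lemma liftE_no_inr {E : Set (Sym2 V)} {a : V} {x : V ⊕ V} :
    s(Sum.inr a, x) ∉ liftE E := by
  rintro ⟨e, -, he⟩
  induction e using Sym2.ind with
  | _ c d =>
    rw [Sym2.map_pair_eq, Sym2.eq_iff] at he
    rcases he with ⟨h, -⟩ | ⟨-, h⟩ <;> exact nomatch h

lemma pend_mem_Pset (u : V) : pendE u ∈ Pset V := ⟨u, rfl⟩

lemma map_inl_not_mem_Pset {e : Sym2 V} : Sym2.map Sum.inl e ∉ Pset V := by
  rintro ⟨u, hu⟩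
  induction e using Sym2.ind with
  | _ c d =>
    rw [Sym2.map_pair_eq] at hu
    rw [pendE, Sym2.eq_iff] at hu
    rcases hu with ⟨-, h⟩ | ⟨-, h⟩ <;> exact nomatch h

lemma diff_edge {E : Set (Sym2 V)} {e : Sym2 V} :
    (liftE E ∪ Pset V) \ {Sym2.map Sum.inl e} = liftE (E \ {e}) ∪ Pset V := by
  have h1 : liftE (E \ {e}) = liftE E \ {Sym2.map Sum.inl e} := by
    simp only [liftE, Set.image_diff inl_inj2, Set.image_singleton]
  rw [Set.union_diff_distrib, Set.diff_singleton_eq_self map_inl_not_mem_Pset, h1]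

lemma diff_edge' {E : Set (Sym2 V)} {u w : V} :
    (liftE E ∪ Pset V) \ {s(Sum.inl u, Sum.inl w)} = liftE (E \ {s(u, w)}) ∪ Pset V := by
  rw [show s((Sum.inl u : V ⊕ V), Sum.inl w) = Sym2.map (Sum.inl : V → V ⊕ V) s(u, w) from
    (Sym2.map_pair_eq _ _ _).symm]
  exact diff_edge

/-- Classify edges incident to `Sum.inl u`. -/
lemma inl_edge {E : Set (Sym2 V)} {u : V} {x : V ⊕ V}
    (h : s(Sum.inl u, x) ∈ liftE E ∪ Pset V) :
    (∃ w, x = Sum.inl w ∧ s(u, w) ∈ E) ∨ x = Sum.inr u := by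
  rcases h with ⟨e, he, heq⟩ | ⟨a, ha⟩
  · left
    induction e using Sym2.ind with
    | _ c d =>
      rw [Sym2.map_pair_eq, Sym2.eq_iff] at heq
      rcases heq with ⟨h1, h2⟩ | ⟨h1, h2⟩
      · obtain rfl : c = u := Sum.inl_injective h1
        exact ⟨d, h2.symm, he⟩
      · obtain rfl : d = u := Sum.inl_injective h2
        refine ⟨c, h1.symm, ?_⟩
        rwa [Sym2.eq_swap]
  · right
    rw [pendE, Sym2.eq_iff] at ha
    rcases ha with ⟨h1, h2⟩ | ⟨h1, h2⟩
    · obtain rfl : a = u := Sum.inl_injective h1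
      exact h2.symm
    · exact nomatch h2

/-- Classify edges incident to `Sum.inr u`. -/
lemma inr_edge {E : Set (Sym2 V)} {u : V} {x : V ⊕ V}
    (h : s(Sum.inr u, x) ∈ liftE E ∪ Pset V) :
    s(Sum.inr u, x) = pendE u := by
  rcases h with h | ⟨a, ha⟩
  · exact absurd h liftE_no_inr
  · rw [pendE, Sym2.eq_iff] at ha
    rcases ha with ⟨h1, h2⟩ | ⟨h1, h2⟩
    · exact nomatch h1
    · obtain rfl : a = u := Sum.inr_injective h2
      subst h1
      exact Sym2.eq_swap

lemma pendant_edgeSet (G : SimpleGraph V) :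
    (pendant G).edgeSet = liftE G.edgeSet ∪ Pset V := by
  ext e
  induction e using Sym2.ind with
  | _ x y =>
    rw [SimpleGraph.mem_edgeSet]
    cases x <;> cases y
    case inl.inl a b =>
      rw [pendant, SimpleGraph.fromRel_adj]
      constructor
      · rintro ⟨-, h | h⟩
        · exact Or.inl (mem_liftE.mpr h)
        · exact Or.inl (mem_liftE.mpr h.symm)
      · rintro (h | ⟨u, hu⟩)
        · have := mem_liftE.mp h
          exact ⟨fun hab => G.irrefl (Sum.inl_injective hab ▸ this), Or.inl this⟩
        · rw [pendE, Sym2.eq_iff] at hu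
          rcases hu with ⟨-, h2⟩ | ⟨-, h2⟩ <;> exact nomatch h2
    case inl.inr a b =>
      rw [pendant, SimpleGraph.fromRel_adj]
      constructor
      · rintro ⟨-, h | h⟩
        · exact Or.inr (h ▸ pend_mem_Pset a)
        · exact absurd h not_false
      · rintro (h | ⟨u, hu⟩)
        · exact absurd (Sym2.eq_swap ▸ h) liftE_no_inr
        · rw [pendE, Sym2.eq_iff] at hu
          rcases hu with ⟨h1, h2⟩ | ⟨h1, h2⟩
          · obtain rfl := Sum.inl_injective h1
            obtain rfl := Sum.inr_injective h2
            exact ⟨(fun h => nomatch h), Or.inl rfl⟩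
          · exact nomatch h1
    case inr.inl a b =>
      rw [pendant, SimpleGraph.fromRel_adj]
      constructor
      · rintro ⟨-, h | h⟩
        · exact absurd h not_false
        · refine Or.inr ?_
          obtain rfl := h
          exact Sym2.eq_swap ▸ pend_mem_Pset b
      · rintro (h | ⟨u, hu⟩)
        · exact absurd h liftE_no_inr
        · rw [pendE, Sym2.eq_iff] at hu
          rcases hu with ⟨h1, h2⟩ | ⟨h1, h2⟩
          · exact nomatch h1
          · obtain rfl := Sum.inl_injective h1
            obtain rfl := Sum.inr_injective h2
            exact ⟨(fun h => nomatch h), Or.inr rfl⟩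
    case inr.inr a b =>
      rw [pendant, SimpleGraph.fromRel_adj]
      constructor
      · rintro ⟨-, h | h⟩ <;> exact absurd h not_false
      · rintro (h | ⟨u, hu⟩)
        · exact absurd h liftE_no_inr
        · rw [pendE, Sym2.eq_iff] at hu
          rcases hu with ⟨h1, -⟩ | ⟨h1, -⟩ <;> exact nomatch h1

lemma fwd : ∀ n : ℕ, ∀ (E : Set (Sym2 V)) (u : V), E.ncard = n →
    (GNormalWin egMoveU (E, u) → GMisereWin egMoveU (liftE E ∪ Pset V, Sum.inl u)) ∧
    (GNormalLose egMoveU (E, u) → GMisereLose egMoveU (liftE E ∪ Pset V, Sum.inl u)) := by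
  intro n
  induction n using Nat.strong_induction_on with
  | _ n IH =>
    intro E u hn
    constructor
    · intro hw
      cases hw with
      | step hmv hlose =>
        rename_i q
        obtain ⟨E1, w⟩ := q
        obtain ⟨hmem, hq1⟩ := hmv
        simp only at hmem hq1
        subst hq1
        refine GMisereWin.step (q := (liftE (E \ {s(u, w)}) ∪ Pset V, Sum.inl w)) ?_ ?_
        · exact ⟨Or.inl (mem_liftE.mpr hmem), diff_edge'.symm⟩
        · have hlt : (E \ {s(u, w)}).ncard < n :=
            hn ▸ Set.ncard_diff_singleton_lt_of_mem hmem (Set.toFinite E)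
          exact (IH _ hlt _ w rfl).2 hlose
    · intro hl
      cases hl with
      | intro hall =>
        refine GMisereLose.intro (q₀ := ((liftE E ∪ Pset V) \ {pendE u}, Sum.inr u)) ?_ ?_
        · exact ⟨Or.inr (pend_mem_Pset u), rfl⟩
        · rintro ⟨S1, x⟩ ⟨hmem, hS1⟩
          simp only at hmem hS1
          subst hS1
          rcases inl_edge hmem with ⟨w, rfl, hE⟩ | rfl
          · have hmove : egMoveU (E, u) (E \ {s(u, w)}, w) := ⟨hE, rfl⟩
            have hwin := hall _ hmove
            have hlt : (E \ {s(u, w)}).ncard < n :=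
              hn ▸ Set.ncard_diff_singleton_lt_of_mem hE (Set.toFinite E)
            have := (IH _ hlt _ w rfl).1 hwin
            rwa [diff_edge']
          · refine GMisereWin.terminal ?_
            rintro ⟨S2, y⟩ ⟨hm, -⟩
            simp only at hm
            exact hm.2 (inr_edge hm.1)

lemma bwd : ∀ n : ℕ, ∀ (E : Set (Sym2 V)) (u : V), E.ncard = n →
    (GMisereWin egMoveU (liftE E ∪ Pset V, Sum.inl u) → GNormalWin egMoveU (E, u)) ∧
    (GMisereLose egMoveU (liftE E ∪ Pset V, Sum.inl u) → GNormalLose egMoveU (E, u)) := by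
  intro n
  induction n using Nat.strong_induction_on with
  | _ n IH =>
    intro E u hn
    constructor
    · intro hw
      cases hw with
      | terminal htm =>
        exact absurd (⟨Or.inr (pend_mem_Pset u), rfl⟩ :
          egMoveU (liftE E ∪ Pset V, Sum.inl u) ((liftE E ∪ Pset V) \ {pendE u}, Sum.inr u))
          (htm _)
      | step hmv hlose =>
        rename_i q
        obtain ⟨S1, x⟩ := q
        obtain ⟨hmem, hS1⟩ := hmv
        simp only at hmem hS1
        subst hS1
        rcases inl_edge hmem with ⟨w, rfl, hE⟩ | rfl
        · have hlt : (E \ {s(u, w)}).ncard < n :=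
            hn ▸ Set.ncard_diff_singleton_lt_of_mem hE (Set.toFinite E)
          refine GNormalWin.step (q := (E \ {s(u, w)}, w)) ⟨hE, rfl⟩ ?_
          refine (IH _ hlt _ w rfl).2 ?_
          rwa [diff_edge'] at hlose
        · cases hlose with
          | intro hmv₀ hall =>
            rename_i q₀
            obtain ⟨hm, -⟩ := hmv₀
            simp only at hm
            exact (hm.2 (inr_edge hm.1)).elim
    · intro hl
      cases hl with
      | intro hmv₀ hall =>
        refine GNormalLose.intro ?_
        rintro ⟨E1, w⟩ ⟨hE, hE1⟩
        simp only at hE hE1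
        subst hE1
        have hmis : egMoveU (liftE E ∪ Pset V, Sum.inl u)
            (liftE (E \ {s(u, w)}) ∪ Pset V, Sum.inl w) :=
          ⟨Or.inl (mem_liftE.mpr hE), diff_edge'.symm⟩
        have hwin := hall _ hmis
        have hlt : (E \ {s(u, w)}).ncard < n :=
          hn ▸ Set.ncard_diff_singleton_lt_of_mem hE (Set.toFinite E)
        exact (IH _ hlt _ w rfl).1 hwin

end Aux

/-- Undirected Edge Geography: the normal outcome of `(G,v)` equals the misère outcome of
`(G',v₁)` where `G'` gives every vertex a fresh pendant neighbour. -/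
theorem stmt3 {V : Type} [Fintype V] (G : SimpleGraph V) (v : V) :
    GNormalWin egMoveU (G.edgeSet, v) ↔
      GMisereWin egMoveU ((pendant G).edgeSet, Sum.inl v) := by
  rw [pendant_edgeSet G]
  constructor
  · exact fun h => (fwd G.edgeSet.ncard G.edgeSet v rfl).1 h
  · exact fun h => (bwd G.edgeSet.ncard G.edgeSet v rfl).1 h
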